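/- Averaging identity: let n = 2k, I, J ⊆ V disjoint with |I| = i < k. Then (k − i) · p_{I,J} = Σ p_{Ī, J}, where the sum runs over all (i+1)-subsets Ī of V with I ⊆ Ī ⊆ Jᶜ. -/
import Mathlib


open Finset

lemma aux_card_ext {α : Type*} [DecidableEq α] (I T : Finset α) (hIT : I ⊆ T) :
    ((Finset.powersetCard (I.card + 1) T).filter (fun I' => I ⊆ I')).card
      = T.card - I.card := by
  rw [← Finset.card_sdiff_of_subset hIT]
  symm
  apply Finset.card_bij (fun x _ => insert x I)
  · intro x hx
    simp only [Finset.mem_sdiff] at hx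
    simp only [Finset.mem_filter, Finset.mem_powersetCard]
    refine ⟨⟨?_, ?_⟩, Finset.subset_insert _ _⟩
    · exact Finset.insert_subset hx.1 hIT
    · rw [Finset.card_insert_of_notMem hx.2]
  · intro x hx y hy h
    simp only [Finset.mem_sdiff] at hx hy
    have : x ∈ insert y I := h ▸ Finset.mem_insert_self x I
    rcases Finset.mem_insert.mp this with h' | h'
    · exact h'
    · exact absurd h' hx.2
  · intro I' hI'
    simp only [Finset.mem_filter, Finset.mem_powersetCard] at hI'
    obtain ⟨⟨hsub, hcard⟩, hII'⟩ := hI'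
    have hne : (I' \ I).Nonempty := by
      rw [← Finset.card_pos, Finset.card_sdiff_of_subset hII', hcard]
      omega
    obtain ⟨x, hx⟩ := hne
    simp only [Finset.mem_sdiff] at hx
    refine ⟨x, Finset.mem_sdiff.mpr ⟨hsub hx.1, hx.2⟩, ?_⟩
    apply Finset.eq_of_subset_of_card_le
    · exact Finset.insert_subset hx.1 hII'
    · rw [hcard, Finset.card_insert_of_notMem hx.2]

theorem paired_averaging {α : Type*} [Fintype α] [DecidableEq α] (k i j : ℕ)
    (hn : Fintype.card α = 2 * k)
    (I J : Finset α) (hd : Disjoint I J) (hi : I.card = i) (hj : J.card = j)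
    (hik : i < k) :
    ∀ K ∈ Finset.powersetCard k (Finset.univ : Finset α),
      ((k - i : ℕ) : ℝ) *
        ((if I ⊆ K ∧ K ⊆ Finset.univ \ J then (1 : ℝ) else 0) +
          (if J ⊆ K ∧ K ⊆ Finset.univ \ I then (1 : ℝ) else 0)) =
      ∑ I' ∈ (Finset.powersetCard (i + 1) ((Finset.univ : Finset α) \ J)).filter
          (fun I' => I ⊆ I'),
        ((if I' ⊆ K ∧ K ⊆ Finset.univ \ J then (1 : ℝ) else 0) +
          (if J ⊆ K ∧ K ⊆ Finset.univ \ I' then (1 : ℝ) else 0)) := by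
  intro K hK
  have hKcard : K.card = k := (Finset.mem_powersetCard.mp hK).2
  rw [Finset.sum_add_distrib, mul_add]
  congr 1
  · -- first term
    rw [Finset.sum_boole]
    by_cases h1 : I ⊆ K ∧ K ⊆ Finset.univ \ J
    · rw [if_pos h1]
      have hset : ((Finset.powersetCard (i + 1) ((Finset.univ : Finset α) \ J)).filter
            (fun I' => I ⊆ I')).filter (fun I' => I' ⊆ K ∧ K ⊆ Finset.univ \ J)
          = (Finset.powersetCard (i + 1) K).filter (fun I' => I ⊆ I') := by
        ext I'
        simp only [Finset.mem_filter, Finset.mem_powersetCard]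
        constructor
        · rintro ⟨⟨⟨_, hc⟩, hII'⟩, hI'K, _⟩
          exact ⟨⟨hI'K, hc⟩, hII'⟩
        · rintro ⟨⟨hI'K, hc⟩, hII'⟩
          exact ⟨⟨⟨hI'K.trans h1.2, hc⟩, hII'⟩, hI'K, h1.2⟩
      rw [hset, ← hi, aux_card_ext I K h1.1, hKcard, hi, mul_one]
    · rw [if_neg h1, mul_zero]
      norm_cast
      symm
      rw [Finset.card_eq_zero, Finset.filter_eq_empty_iff]
      intro I' hI'
      simp only [Finset.mem_filter, Finset.mem_powersetCard] at hI'
      rintro ⟨hI'K, hKJ⟩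
      exact h1 ⟨hI'.2.trans hI'K, hKJ⟩
  · -- second term
    rw [Finset.sum_boole]
    by_cases h2 : J ⊆ K ∧ K ⊆ Finset.univ \ I
    · rw [if_pos h2]
      have hIK : I ⊆ Finset.univ \ K := by
        intro x hx
        simp only [Finset.mem_sdiff, Finset.mem_univ, true_and]
        intro hxK
        have := h2.2 hxK
        simp only [Finset.mem_sdiff] at this
        exact this.2 hx
      have hset : ((Finset.powersetCard (i + 1) ((Finset.univ : Finset α) \ J)).filter
            (fun I' => I ⊆ I')).filter (fun I' => J ⊆ K ∧ K ⊆ Finset.univ \ I')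
          = (Finset.powersetCard (i + 1) (Finset.univ \ K)).filter (fun I' => I ⊆ I') := by
        ext I'
        simp only [Finset.mem_filter, Finset.mem_powersetCard]
        constructor
        · rintro ⟨⟨⟨_, hc⟩, hII'⟩, _, hKI'⟩
          refine ⟨⟨?_, hc⟩, hII'⟩
          intro x hx
          simp only [Finset.mem_sdiff, Finset.mem_univ, true_and]
          intro hxK
          have := hKI' hxK
          simp only [Finset.mem_sdiff] at this
          exact this.2 hx
        · rintro ⟨⟨hI'Kc, hc⟩, hII'⟩
          refine ⟨⟨⟨?_, hc⟩, hII'⟩, h2.1, ?_⟩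
          · intro x hx
            simp only [Finset.mem_sdiff, Finset.mem_univ, true_and]
            intro hxJ
            have hxK := h2.1 hxJ
            have := hI'Kc hx
            simp only [Finset.mem_sdiff] at this
            exact this.2 hxK
          · intro x hx
            simp only [Finset.mem_sdiff, Finset.mem_univ, true_and]
            intro hxI'
            have := hI'Kc hxI'
            simp only [Finset.mem_sdiff] at this
            exact this.2 hx
      rw [hset, ← hi, aux_card_ext I (Finset.univ \ K) hIK]
      have : ((Finset.univ : Finset α) \ K).card = k := by
        rw [Finset.card_sdiff_of_subset (Finset.subset_univ K), Finset.card_univ, hn, hKcard]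
        omega
      rw [this, hi, mul_one]
    · rw [if_neg h2, mul_zero]
      norm_cast
      symm
      rw [Finset.card_eq_zero, Finset.filter_eq_empty_iff]
      intro I' hI'
      simp only [Finset.mem_filter, Finset.mem_powersetCard] at hI'
      rintro ⟨hJK, hKI'⟩
      refine h2 ⟨hJK, ?_⟩
      exact hKI'.trans (Finset.sdiff_subset_sdiff le_rfl hI'.2)
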